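/- Every Malcev algebra over a field F with char F ≠ 2 is 3-mixing. Consequently, if A is a finite-dimensional Malcev algebra over such a field with dim A = d ≥ 2, then l(A) ≤ 2d. -/

import Mathlib

namespace P

/-- The list of leaves (letters) of a nonassociative word, in order. -/
def leafList {α : Type*} : FreeMagma α → List α
  | .of a => [a]
  | .mul x y => leafList x ++ leafList y

/-- The length of a nonassociative word: the number of factors. -/
def wlen {α : Type*} (w : FreeMagma α) : ℕ := (leafList w).length

/-- Evaluation of a formal word with letters in a magma `A`. -/
def evalA {A : Type*} [Mul A] (w : FreeMagma A) : A :=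
  FreeMagma.lift (id : A → A) w

/-- Evaluation of a formal word in variables `Fin n` under an assignment `v`. -/
def evalVar {A : Type*} [Mul A] {n : ℕ} (v : Fin n → A) (w : FreeMagma (Fin n)) : A :=
  FreeMagma.lift v w

/-- `w` is a word in the set `S`: all its letters belong to `S`. -/
def HasLeavesIn {A : Type*} (S : Set A) (w : FreeMagma A) : Prop :=
  ∀ a ∈ leafList w, a ∈ S

/-- `L_i(S)`: the span of all values of words in `S` of length at most `i`.
For `i = 0` this is `0`, since every word has length at least 1. -/
def Lspan (F : Type*) {A : Type*} [Field F] [NonUnitalNonAssocRing A] [Module F A]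
    (S : Set A) (i : ℕ) : Submodule F A :=
  Submodule.span F { a | ∃ w : FreeMagma A, HasLeavesIn S w ∧ wlen w ≤ i ∧ evalA w = a }

/-- `S` is a generating set of the algebra `A`. -/
def Generates (F : Type*) {A : Type*} [Field F] [NonUnitalNonAssocRing A] [Module F A]
    (S : Set A) : Prop :=
  Submodule.span F { a | ∃ w : FreeMagma A, HasLeavesIn S w ∧ evalA w = a } = ⊤

/-- The length `l(S)` of a generating set: the least `k` with `L_k(S) = A`. -/
noncomputable def lenS (F : Type*) {A : Type*} [Field F] [NonUnitalNonAssocRing A] [Module F A]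
    (S : Set A) : ℕ :=
  sInf { k | Lspan F S k = ⊤ }

/-- The characteristic sequence of a generating set `S`, as a predicate on a
nondecreasing sequence `m : Fin d → ℕ`. -/
def IsCharSeq (F : Type*) {A : Type*} [Field F] [NonUnitalNonAssocRing A] [Module F A]
    (S : Set A) {d : ℕ} (m : Fin d → ℕ) : Prop :=
  Monotone m ∧ (∀ j, 1 ≤ m j) ∧
    ∀ t : ℕ, 1 ≤ t →
      (Finset.univ.filter fun j => m j = t).card =
        Module.finrank F (Lspan F S t) - Module.finrank F (Lspan F S (t - 1))

/-- `w` is a multilinear word using each variable of `T` exactly once. -/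
def IsMultilinearOn {n : ℕ} (T : Finset (Fin n)) (w : FreeMagma (Fin n)) : Prop :=
  (leafList w : Multiset (Fin n)) = T.val

/-- Membership in `D_0(z_0,…,z_k)`: multilinear words in `z_0,…,z_k` except those of
length `k+1` in which `z_0` is a factor of the last multiplication. -/
def InD0 {k : ℕ} (w : FreeMagma (Fin (k + 1))) : Prop :=
  (leafList w : Multiset (Fin (k + 1))).Nodup ∧
    ¬∃ u : FreeMagma (Fin (k + 1)),
        IsMultilinearOn (Finset.univ.erase 0) u ∧
          (w = FreeMagma.of 0 * u ∨ w = u * FreeMagma.of 0)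

/-- Membership in `D_l(z_0,…,z_k)`: multilinear words in `z_0,…,z_k` except those of
length `k+1` in which `z_0` occurs in the first factor of the last multiplication. -/
def InDl {k : ℕ} (w : FreeMagma (Fin (k + 1))) : Prop :=
  (leafList w : Multiset (Fin (k + 1))).Nodup ∧
    ¬((leafList w : Multiset (Fin (k + 1))) = (Finset.univ : Finset (Fin (k + 1))).val ∧
      ∃ w1 w2 : FreeMagma (Fin (k + 1)), w = w1 * w2 ∧ (0 : Fin (k + 1)) ∈ leafList w1)

/-- Membership in `D_r(z_0,…,z_k)`: multilinear words in `z_0,…,z_k` except those of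
length `k+1` in which `z_0` occurs in the second factor of the last multiplication. -/
def InDr {k : ℕ} (w : FreeMagma (Fin (k + 1))) : Prop :=
  (leafList w : Multiset (Fin (k + 1))).Nodup ∧
    ¬((leafList w : Multiset (Fin (k + 1))) = (Finset.univ : Finset (Fin (k + 1))).val ∧
      ∃ w1 w2 : FreeMagma (Fin (k + 1)), w = w1 * w2 ∧ (0 : Fin (k + 1)) ∈ leafList w2)

/-- The algebra `A` is `k`-mixing. -/
def IsKMixing (F A : Type*) [Field F] [NonUnitalNonAssocRing A] [Module F A] (k : ℕ) : Prop :=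
  ∀ (x : A) (y : Fin k → A) (w : FreeMagma (Fin (k + 1))),
    (∃ u, IsMultilinearOn (Finset.univ.erase 0) u ∧
        (w = FreeMagma.of 0 * u ∨ w = u * FreeMagma.of 0)) →
      evalVar (Fin.cons x y) w ∈
        Submodule.span F
          { a | ∃ z : FreeMagma (Fin (k + 1)), InD0 z ∧ evalVar (Fin.cons x y) z = a }

/-- The algebra `A` is `k`-sliding. -/
def IsKSliding (F A : Type*) [Field F] [NonUnitalNonAssocRing A] [Module F A] (k : ℕ) : Prop :=
  (∀ (x : A) (y : Fin k → A) (u : FreeMagma (Fin (k + 1))),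
      IsMultilinearOn (Finset.univ.erase 0) u →
        evalVar (Fin.cons x y) (u * FreeMagma.of 0) ∈
          Submodule.span F
            { a | ∃ z : FreeMagma (Fin (k + 1)), InDl z ∧ evalVar (Fin.cons x y) z = a }) ∨
  (∀ (x : A) (y : Fin k → A) (u : FreeMagma (Fin (k + 1))),
      IsMultilinearOn (Finset.univ.erase 0) u →
        evalVar (Fin.cons x y) (FreeMagma.of 0 * u) ∈
          Submodule.span F
            { a | ∃ z : FreeMagma (Fin (k + 1)), InDr z ∧ evalVar (Fin.cons x y) z = a })

/-- `u` is a subword of `w`. -/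
inductive IsSubword {A : Type*} : FreeMagma A → FreeMagma A → Prop
  | refl (w : FreeMagma A) : IsSubword w w
  | left {s u : FreeMagma A} (v : FreeMagma A) : IsSubword s u → IsSubword s (u * v)
  | right (u : FreeMagma A) {s v : FreeMagma A} : IsSubword s v → IsSubword s (u * v)

/-- `IsSprout w L`: `L` is a sprout sequence of the word `w` (with the convention that
words of length 1 have the empty sprout sequence). -/
inductive IsSprout {A : Type*} : FreeMagma A → List (FreeMagma A) → Prop
  | single (a : A) : IsSprout (FreeMagma.of a) []
  | cons_l {u v : FreeMagma A} {L : List (FreeMagma A)} :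
      wlen u ≤ wlen v → IsSprout v L → IsSprout (u * v) (u :: L)
  | cons_r {u v : FreeMagma A} {L : List (FreeMagma A)} :
      wlen v ≤ wlen u → IsSprout u L → IsSprout (u * v) (v :: L)

/-- A word is `k`-bounded if it has length 1 or admits an `l`-sprout sequence all of whose
terms are strictly less than `k`. -/
def KBounded {A : Type*} (k : ℕ) (w : FreeMagma A) : Prop :=
  ∃ L : List (FreeMagma A), IsSprout w L ∧ ∀ u ∈ L, wlen u < k

/-- A word `w` in `S` is irreducible if it does not lie in `L_m(S)` for any `m < l(w)`. -/
def Irred (F : Type*) {A : Type*} [Field F] [NonUnitalNonAssocRing A] [Module F A]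
    (S : Set A) (w : FreeMagma A) : Prop :=
  ∀ m : ℕ, m < wlen w → evalA w ∉ Lspan F S m

/-- The step function of a word: the least `t` such that `w` has a subword of
length `l(w) - 2t - 1`. -/
noncomputable def stepFn {A : Type*} (w : FreeMagma A) : ℕ :=
  sInf { t : ℕ | ∃ u : FreeMagma A, IsSubword u w ∧ wlen u + 2 * t + 1 = wlen w }

/-- `w` is a `p`-step word for the generating set `S`. -/
def IsPStepWord (F : Type*) {A : Type*} [Field F] [NonUnitalNonAssocRing A] [Module F A]
    (S : Set A) (w : FreeMagma A) (p : ℕ) : Prop :=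
  HasLeavesIn S w ∧ Irred F S w ∧ KBounded 3 w ∧ stepFn w = p ∧
    ∀ v : FreeMagma A, HasLeavesIn S v → Irred F S v → KBounded 3 v → wlen v = wlen w →
      p ≤ stepFn v

/-- `A` is `k`-round: `x · v = 0` for every product `v` of `k` elements. -/
def IsKRound (A : Type*) [NonUnitalNonAssocRing A] (k : ℕ) : Prop :=
  ∀ (x : A) (w : FreeMagma A), wlen w = k → x * evalA w = 0

/-- `A` is `k`-based. -/
def IsKBased (A : Type*) [NonUnitalNonAssocRing A] (k : ℕ) : Prop :=
  ∀ (x : A) (u v : FreeMagma A), wlen u + wlen v = k →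
    x * (evalA u * evalA v) = evalA u * (x * evalA v) ∧
      (evalA u * evalA v) * x = (evalA u * x) * evalA v

/-- The set `P(x,y,z)`. -/
def Pset {A : Type*} [Mul A] (x y z : A) : Set A :=
  {(x*z)*y, (z*x)*y, (y*z)*x, (z*y)*x, x*(z*y), x*(y*z), y*(x*z), y*(z*x),
    x*y, y*x, x*z, z*x, y*z, z*y, x, y, z}

/-- The set `Q_l(x,y,z)`. -/
def Qlset {A : Type*} [Mul A] (x y z : A) : Set A :=
  {x*(z*y), x*(y*z), y*(x*z), y*(z*x), x*y, y*x, x*z, z*x, y*z, z*y, x, y, z}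

/-- The set `Q_r(x,y,z)`. -/
def Qrset {A : Type*} [Mul A] (x y z : A) : Set A :=
  {(x*z)*y, (z*x)*y, (y*z)*x, (z*y)*x, x*y, y*x, x*z, z*x, y*z, z*y, x, y, z}

/-- `A` is a mixing algebra. -/
def IsMixingAlg (F A : Type*) [Field F] [NonUnitalNonAssocRing A] [Module F A] : Prop :=
  ∀ x y z : A, (x*y)*z ∈ Submodule.span F (Pset x y z) ∧
    z*(x*y) ∈ Submodule.span F (Pset x y z)

/-- `A` is a sliding algebra. -/
def IsSlidingAlg (F A : Type*) [Field F] [NonUnitalNonAssocRing A] [Module F A] : Prop :=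
  (∀ x y z : A, z*(x*y) ∈ Submodule.span F (Qrset x y z)) ∨
  (∀ x y z : A, (x*y)*z ∈ Submodule.span F (Qlset x y z))


-- AUX
@[simp] lemma leafList_of {α : Type*} (a : α) : leafList (FreeMagma.of a) = [a] := rfl
@[simp] lemma leafList_mul {α : Type*} (x y : FreeMagma α) :
    leafList (x * y) = leafList x ++ leafList y := rfl
@[simp] lemma evalA_of {A : Type*} [Mul A] (a : A) : evalA (FreeMagma.of a) = a := rfl
@[simp] lemma evalA_mul {A : Type*} [Mul A] (x y : FreeMagma A) :
    evalA (x * y) = evalA x * evalA y := rfl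
@[simp] lemma evalVar_of {A : Type*} [Mul A] {n : ℕ} (v : Fin n → A) (i : Fin n) :
    evalVar v (FreeMagma.of i) = v i := rfl
@[simp] lemma evalVar_mul {A : Type*} [Mul A] {n : ℕ} (v : Fin n → A) (x y : FreeMagma (Fin n)) :
    evalVar v (x * y) = evalVar v x * evalVar v y := rfl

lemma wlen_mul {α : Type*} (x y : FreeMagma α) : wlen (x*y) = wlen x + wlen y := by
  simp [wlen]

lemma wlen_pos {α : Type*} (w : FreeMagma α) : 1 ≤ wlen w := by
  induction w with
  | ih1 a => simp [wlen]
  | ih2 x y ihx ihy => rw [wlen_mul]; omega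

@[simp] lemma wlen_of {α : Type*} (a : α) : wlen (FreeMagma.of a) = 1 := rfl

lemma eq_of_wlen_one {α : Type*} {w : FreeMagma α} (h : wlen w = 1) : ∃ a, w = FreeMagma.of a := by
  cases w with
  | of a => exact ⟨a, rfl⟩
  | mul x y =>
    rw [show x.mul y = x*y from rfl, wlen_mul] at h
    have := wlen_pos x; have := wlen_pos y; omega

/-- substitution of words for variables -/
def wsub {A : Type*} (g : Fin 4 → FreeMagma A) (z : FreeMagma (Fin 4)) : FreeMagma A :=
  (FreeMagma.lift g : FreeMagma (Fin 4) →ₙ* FreeMagma A) z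

@[simp] lemma wsub_of {A : Type*} (g : Fin 4 → FreeMagma A) (i : Fin 4) :
    wsub g (FreeMagma.of i) = g i := rfl
@[simp] lemma wsub_mul {A : Type*} (g : Fin 4 → FreeMagma A) (x y : FreeMagma (Fin 4)) :
    wsub g (x * y) = wsub g x * wsub g y := rfl

lemma evalA_wsub {A : Type*} [Mul A] (g : Fin 4 → FreeMagma A) (z : FreeMagma (Fin 4)) :
    evalA (wsub g z) = evalVar (fun i => evalA (g i)) z := by
  induction z with
  | ih1 i => simp
  | ih2 x y ihx ihy => simp [ihx, ihy]

lemma leafList_wsub {A : Type*} (g : Fin 4 → FreeMagma A) (z : FreeMagma (Fin 4)) :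
    leafList (wsub g z) = (leafList z).flatMap (fun i => leafList (g i)) := by
  induction z with
  | ih1 i => simp
  | ih2 x y ihx ihy => simp [ihx, ihy]

lemma wlen_wsub {A : Type*} (g : Fin 4 → FreeMagma A) (z : FreeMagma (Fin 4)) :
    wlen (wsub g z) = ((leafList z).map (fun i => wlen (g i))).sum := by
  induction z with
  | ih1 i => simp [wlen]
  | ih2 x y ihx ihy => rw [wsub_mul, wlen_mul, ihx, ihy]; simp

lemma hasLeavesIn_wsub {A : Type*} {S : Set A} {g : Fin 4 → FreeMagma A}
    (h : ∀ i, HasLeavesIn S (g i)) (z : FreeMagma (Fin 4)) : HasLeavesIn S (wsub g z) := by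
  intro a ha
  rw [leafList_wsub] at ha
  simp only [List.mem_flatMap] at ha
  obtain ⟨i, -, hi⟩ := ha
  exact h i a hi

section Bilin
variable {F A : Type*} [Field F] [NonUnitalNonAssocRing A] [Module F A]
  [SMulCommClass F A A] [IsScalarTower F A A]

lemma mul_mem_span_left {s : Set A} {p : Submodule F A} {x c : A}
    (hx : x ∈ Submodule.span F s) (h : ∀ a ∈ s, a * c ∈ p) : x * c ∈ p := by
  induction hx using Submodule.span_induction with
  | mem a ha => exact h a ha
  | zero => simpa using p.zero_mem
  | add u v hu hv ihu ihv => rw [add_mul]; exact p.add_mem ihu ihv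
  | smul r u hu ihu => rw [smul_mul_assoc]; exact p.smul_mem r ihu

lemma mul_mem_span_right {s : Set A} {p : Submodule F A} {x c : A}
    (hx : x ∈ Submodule.span F s) (h : ∀ a ∈ s, c * a ∈ p) : c * x ∈ p := by
  induction hx using Submodule.span_induction with
  | mem a ha => exact h a ha
  | zero => simpa using p.zero_mem
  | add u v hu hv ihu ihv => rw [mul_add]; exact p.add_mem ihu ihv
  | smul r u hu ihu => rw [mul_smul_comm]; exact p.smul_mem r ihu

lemma mul_mem_span_span {s t : Set A} {p : Submodule F A} {x y : A}
    (hx : x ∈ Submodule.span F s) (hy : y ∈ Submodule.span F t)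
    (h : ∀ a ∈ s, ∀ b ∈ t, a * b ∈ p) : x * y ∈ p :=
  mul_mem_span_left hx (fun a ha => mul_mem_span_right hy (fun b hb => h a ha b hb))

end Bilin

section Kb
variable {A : Type*}

lemma kbounded_of_wlen_le_two {w : FreeMagma A} (h : wlen w ≤ 2) : KBounded 3 w := by
  cases w with
  | of a => exact ⟨[], IsSprout.single a, by simp⟩
  | mul x y =>
    rw [show x.mul y = x*y from rfl] at *
    rw [wlen_mul] at h
    have hx := wlen_pos x; have hy := wlen_pos y
    have hx1 : wlen x = 1 := by omega
    have hy1 : wlen y = 1 := by omega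
    obtain ⟨b, rfl⟩ := eq_of_wlen_one hy1
    exact ⟨[x], IsSprout.cons_l (by omega) (IsSprout.single b), by simp [hx1]⟩

lemma kbounded_mul {a b : FreeMagma A} (ha : KBounded 3 a) (hb : KBounded 3 b)
    (h : wlen a ≤ 2 ∨ wlen b ≤ 2) : KBounded 3 (a * b) := by
  obtain ⟨La, hsa, hla⟩ := ha
  obtain ⟨Lb, hsb, hlb⟩ := hb
  rcases le_or_gt (wlen a) (wlen b) with hab | hab
  · have ha2 : wlen a ≤ 2 := by
      rcases h with h | h
      · exact h
      · omega
    exact ⟨a :: Lb, IsSprout.cons_l hab hsb, by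
      intro u hu
      rcases List.mem_cons.mp hu with rfl | hu
      · omega
      · exact hlb u hu⟩
  · have hb2 : wlen b ≤ 2 := by
      rcases h with h | h
      · omega
      · exact h
    exact ⟨b :: La, IsSprout.cons_r (by omega) hsa, by
      intro u hu
      rcases List.mem_cons.mp hu with rfl | hu
      · omega
      · exact hla u hu⟩

/-- A 3-bounded word of length ≥ 2 splits off a factor of length ≤ 2. -/
lemma kbounded_split {w : FreeMagma A} (hw : KBounded 3 w) (h2 : 2 ≤ wlen w) :
    ∃ u c : FreeMagma A, (w = u * c ∨ w = c * u) ∧ wlen c ≤ 2 ∧ KBounded 3 u := by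
  obtain ⟨L, hs, hl⟩ := hw
  cases hs with
  | single a => simp [wlen] at h2
  | @cons_l u v L' hle hs' =>
    refine ⟨v, u, Or.inr rfl, ?_, ⟨L', hs', fun x hx => hl x (List.mem_cons_of_mem _ hx)⟩⟩
    have := hl u List.mem_cons_self; omega
  | @cons_r u v L' hle hs' =>
    refine ⟨u, v, Or.inl rfl, ?_, ⟨L', hs', fun x hx => hl x (List.mem_cons_of_mem _ hx)⟩⟩
    have := hl v List.mem_cons_self; omega

/-- Any word of length ≥ 3 decomposes as a 3-variable multilinear shape. -/
lemma exists_three_split {w : FreeMagma A} (h3 : 3 ≤ wlen w) :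
    ∃ (u : FreeMagma (Fin 4)) (q : Fin 3 → FreeMagma A),
      IsMultilinearOn (Finset.univ.erase 0) u ∧
      (∀ a : FreeMagma A, wsub (Fin.cons a q) u = w) ∧
      leafList w = leafList (q 0) ++ leafList (q 1) ++ leafList (q 2) := by
  cases w with
  | of a => simp [wlen] at h3
  | mul w1 w2 =>
    rw [show w1.mul w2 = w1*w2 from rfl] at *
    rw [wlen_mul] at h3
    have h1 := wlen_pos w1; have h2 := wlen_pos w2
    rcases le_or_gt 2 (wlen w1) with hw1 | hw1
    · cases w1 with
      | of a => simp [wlen] at hw1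
      | mul w11 w12 =>
        rw [show w11.mul w12 = w11*w12 from rfl] at *
        refine ⟨(FreeMagma.of 1 * FreeMagma.of 2) * FreeMagma.of 3, ![w11, w12, w2], ?_, ?_, ?_⟩
        · exact (by decide : ((leafList ((FreeMagma.of 1 * FreeMagma.of 2) * FreeMagma.of 3 : FreeMagma (Fin 4))) : Multiset (Fin 4)) = (Finset.univ.erase 0).val)
        · intro a; rfl
        · rfl
    · have hw1' : wlen w1 = 1 := by omega
      have hw2 : 2 ≤ wlen w2 := by omega
      cases w2 with
      | of a => simp [wlen] at hw2
      | mul w21 w22 =>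
        rw [show w21.mul w22 = w21*w22 from rfl] at *
        refine ⟨FreeMagma.of 1 * (FreeMagma.of 2 * FreeMagma.of 3), ![w1, w21, w22], ?_, ?_, ?_⟩
        · exact (by decide : ((leafList (FreeMagma.of 1 * (FreeMagma.of 2 * FreeMagma.of 3) : FreeMagma (Fin 4))) : Multiset (Fin 4)) = (Finset.univ.erase 0).val)
        · intro a; rfl
        · show leafList w1 ++ (leafList w21 ++ leafList w22) = _
          simp [List.append_assoc]

end Kb

lemma mul_ne_of {α : Type*} (x y : FreeMagma α) (a : α) : x * y ≠ FreeMagma.of a :=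
  fun h => by cases h

lemma inD0_mk {w1 w2 : FreeMagma (Fin 4)}
    (hnd : ((leafList (w1 * w2) : List (Fin 4)) : Multiset (Fin 4)).Nodup)
    (h1 : w1 ≠ FreeMagma.of 0) (h2 : w2 ≠ FreeMagma.of 0) : InD0 (k := 3) (w1 * w2) := by
  refine ⟨hnd, ?_⟩
  rintro ⟨u, -, h | h⟩
  · exact h1 (congrArg (fun t => match t with | FreeMagma.mul a _ => a | _ => w1) h)
  · exact h2 (congrArg (fun t => match t with | FreeMagma.mul _ b => b | _ => w2) h)

lemma nodup_word4 {i j k l : Fin 4} (h12 : i ≠ j) (h13 : i ≠ k) (h14 : i ≠ l)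
    (h23 : j ≠ k) (h24 : j ≠ l) (h34 : k ≠ l) :
    (([i, j, k, l] : List (Fin 4)) : Multiset (Fin 4)).Nodup := by
  simp [List.nodup_cons, h12, h13, h14, h23, h24, h34]

lemma eq_of_wlen_two {α : Type*} {w : FreeMagma α} (h : wlen w = 2) :
    ∃ a b, w = FreeMagma.of a * FreeMagma.of b := by
  cases w with
  | of a => simp [wlen] at h
  | mul x y =>
    rw [show x.mul y = x * y from rfl] at *
    rw [wlen_mul] at h
    have hx := wlen_pos x; have hy := wlen_pos y
    obtain ⟨a, rfl⟩ := eq_of_wlen_one (by omega : wlen x = 1)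
    obtain ⟨b, rfl⟩ := eq_of_wlen_one (by omega : wlen y = 1)
    exact ⟨a, b, rfl⟩

lemma shape3 {α : Type*} {u : FreeMagma α} (h : wlen u = 3) :
    (∃ a b c, u = (FreeMagma.of a * FreeMagma.of b) * FreeMagma.of c) ∨
    (∃ a b c, u = FreeMagma.of a * (FreeMagma.of b * FreeMagma.of c)) := by
  cases u with
  | of a => simp [wlen] at h
  | mul x y =>
    rw [show x.mul y = x * y from rfl] at *
    rw [wlen_mul] at h
    have hx := wlen_pos x; have hy := wlen_pos y
    rcases (by omega : wlen x = 1 ∧ wlen y = 2 ∨ wlen x = 2 ∧ wlen y = 1) with ⟨h1, h2⟩ | ⟨h1, h2⟩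
    · obtain ⟨a, rfl⟩ := eq_of_wlen_one h1
      obtain ⟨b, c, rfl⟩ := eq_of_wlen_two h2
      exact Or.inr ⟨a, b, c, rfl⟩
    · obtain ⟨a, b, rfl⟩ := eq_of_wlen_two h1
      obtain ⟨c, rfl⟩ := eq_of_wlen_one h2
      exact Or.inl ⟨a, b, c, rfl⟩

section Malcev
variable {F A : Type*} [Field F] [NonUnitalNonAssocRing A] [Module F A]
  [SMulCommClass F A A] [IsScalarTower F A A]

theorem malcev_mixing (hchar : (2 : F) ≠ 0)
    (hanti : ∀ x y : A, x * y = -(y * x))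
    (hmal : ∀ x y z : A, (x*y)*(x*z) = ((x*y)*z)*x + ((y*z)*x)*x + ((z*x)*x)*y) :
    IsKMixing F A 3 := by
  have key : ∀ x a b c : A, (x*b)*(a*c) + (a*b)*(x*c)
      = ((x*b)*c)*a + ((a*b)*c)*x + ((b*c)*x)*a + ((b*c)*a)*x + ((c*x)*a)*b + ((c*a)*x)*b := by
    intro x a b c
    have e1 : ((x+a)*b)*((x+a)*c)
        = (x*b)*(x*c) + (x*b)*(a*c) + (a*b)*(x*c) + (a*b)*(a*c) := by
      simp only [add_mul, mul_add]; try abel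
    have e2 : (((x+a)*b)*c)*(x+a) + ((b*c)*(x+a))*(x+a) + ((c*(x+a))*(x+a))*b
        = ((x*b)*c)*x + ((x*b)*c)*a + ((a*b)*c)*x + ((a*b)*c)*a
          + (((b*c)*x)*x + ((b*c)*x)*a + ((b*c)*a)*x + ((b*c)*a)*a)
          + ((((c*x)*x)*b + ((c*x)*a)*b + ((c*a)*x)*b + ((c*a)*a)*b)) := by
      simp only [add_mul, mul_add]; try abel
    have h2 := hmal x b c
    have h3 := hmal a b c
    calc (x*b)*(a*c) + (a*b)*(x*c)
        = ((x*b)*(x*c) + (x*b)*(a*c) + (a*b)*(x*c) + (a*b)*(a*c))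
            - (x*b)*(x*c) - (a*b)*(a*c) := by abel
      _ = (((x+a)*b)*((x+a)*c)) - (x*b)*(x*c) - (a*b)*(a*c) := by rw [e1]
      _ = ((((x+a)*b)*c)*(x+a) + ((b*c)*(x+a))*(x+a) + ((c*(x+a))*(x+a))*b)
            - (x*b)*(x*c) - (a*b)*(a*c) := by rw [hmal (x+a) b c]
      _ = (((x*b)*c)*x + ((x*b)*c)*a + ((a*b)*c)*x + ((a*b)*c)*a
          + (((b*c)*x)*x + ((b*c)*x)*a + ((b*c)*a)*x + ((b*c)*a)*a)
          + ((((c*x)*x)*b + ((c*x)*a)*b + ((c*a)*x)*b + ((c*a)*a)*b)))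
            - (x*b)*(x*c) - (a*b)*(a*c) := by rw [e2]
      _ = ((x*b)*c)*a + ((a*b)*c)*x + ((b*c)*x)*a + ((b*c)*a)*x + ((c*x)*a)*b + ((c*a)*x)*b := by
            rw [h2, h3]; abel
  intro x y w hwex
  set v : Fin 4 → A := Fin.cons x y with hv
  set V := Submodule.span F
      { a | ∃ z : FreeMagma (Fin 4), InD0 (k := 3) z ∧ evalVar v z = a } with hV
  have hgen : ∀ z : FreeMagma (Fin 4), InD0 (k := 3) z → evalVar v z ∈ V :=
    fun z hz => Submodule.subset_span ⟨z, hz, rfl⟩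
  set G : Fin 4 → Fin 4 → Fin 4 → A := fun i j k => ((v i * v j) * v k) * v 0 with hGdef
  have hS : ∀ i j k : Fin 4, i ≠ 0 → j ≠ 0 → k ≠ 0 → i ≠ j → i ≠ k → j ≠ k →
      G i j k + G j k i ∈ V := by
    intro i j k hi hj hk hij hik hjk
    have m1 : (v 0 * v j) * (v i * v k) ∈ V := by
      refine hgen ((.of 0 * .of j) * (.of i * .of k) : FreeMagma (Fin 4)) (inD0_mk ?_ (mul_ne_of _ _ _) (mul_ne_of _ _ _))
      exact nodup_word4 (Ne.symm hj) (Ne.symm hi) (Ne.symm hk) (Ne.symm hij) hjk hik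
    have m2 : (v i * v j) * (v 0 * v k) ∈ V := by
      refine hgen ((.of i * .of j) * (.of 0 * .of k) : FreeMagma (Fin 4)) (inD0_mk ?_ (mul_ne_of _ _ _) (mul_ne_of _ _ _))
      exact nodup_word4 hij hi hik hj hjk (Ne.symm hk)
    have m3 : ((v 0 * v j) * v k) * v i ∈ V := by
      refine hgen (((.of 0 * .of j) * .of k) * .of i : FreeMagma (Fin 4)) (inD0_mk ?_ (mul_ne_of _ _ _) (fun h => hi (by injection h)))
      exact nodup_word4 (Ne.symm hj) (Ne.symm hk) (Ne.symm hi) hjk (Ne.symm hij) (Ne.symm hik)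
    have m4 : ((v j * v k) * v 0) * v i ∈ V := by
      refine hgen (((.of j * .of k) * .of 0) * .of i : FreeMagma (Fin 4)) (inD0_mk ?_ (mul_ne_of _ _ _) (fun h => hi (by injection h)))
      exact nodup_word4 hjk hj (Ne.symm hij) hk (Ne.symm hik) (Ne.symm hi)
    have m5 : ((v k * v 0) * v i) * v j ∈ V := by
      refine hgen (((.of k * .of 0) * .of i) * .of j : FreeMagma (Fin 4)) (inD0_mk ?_ (mul_ne_of _ _ _) (fun h => hj (by injection h)))
      exact nodup_word4 hk (Ne.symm hik) (Ne.symm hjk) (Ne.symm hi) (Ne.symm hj) hij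
    have m6 : ((v k * v i) * v 0) * v j ∈ V := by
      refine hgen (((.of k * .of i) * .of 0) * .of j : FreeMagma (Fin 4)) (inD0_mk ?_ (mul_ne_of _ _ _) (fun h => hj (by injection h)))
      exact nodup_word4 (Ne.symm hik) hk (Ne.symm hjk) hi hij (Ne.symm hj)
    have e := key (v 0) (v i) (v j) (v k)
    have hrw : G i j k + G j k i
        = (v 0 * v j) * (v i * v k) + (v i * v j) * (v 0 * v k)
          - ((v 0 * v j) * v k) * v i - ((v j * v k) * v 0) * v i
          - ((v k * v 0) * v i) * v j - ((v k * v i) * v 0) * v j := by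
      rw [e]; simp only [hGdef]; abel
    rw [hrw]
    exact sub_mem (sub_mem (sub_mem (sub_mem (add_mem m1 m2) m3) m4) m5) m6
  have hG : ∀ i j k : Fin 4, i ≠ 0 → j ≠ 0 → k ≠ 0 → i ≠ j → i ≠ k → j ≠ k →
      G i j k ∈ V := by
    intro i j k hi hj hk hij hik hjk
    have hs1 := hS j k i hj hk hi hjk (Ne.symm hij) (Ne.symm hik)
    have hs2 := hS k i j hk hi hj (Ne.symm hik) (Ne.symm hjk) hij
    have hs3 := hS i j k hi hj hk hij hik hjk
    have hC : G j k i + G k i j + G i j k ∈ V := by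
      have h2 : (2:F) • (G j k i + G k i j + G i j k)
          = (G j k i + G k i j) + ((G k i j + G i j k) + (G i j k + G j k i)) := by
        rw [two_smul]; abel
      have hsum := add_mem hs1 (add_mem hs2 hs3)
      have h3 : G j k i + G k i j + G i j k
          = (2:F)⁻¹ • ((G j k i + G k i j) + ((G k i j + G i j k) + (G i j k + G j k i))) := by
        rw [← h2, inv_smul_smul₀ hchar]
      rw [h3]
      exact V.smul_mem _ hsum
    have h4 : G i j k = (G j k i + G k i j + G i j k) - (G j k i + G k i j) := by abel
    rw [h4]
    exact sub_mem hC hs1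
  obtain ⟨u, hu, hw⟩ := hwex
  have hlen : wlen u = 3 := by
    have hc := congrArg Multiset.card hu
    simpa [wlen] using hc
  rcases shape3 hlen with ⟨a, b, c, rfl⟩ | ⟨a, b, c, rfl⟩
  · have hnd : (([a, b, c] : List (Fin 4)) : Multiset (Fin 4)).Nodup := by
      rw [show (([a,b,c] : List (Fin 4)) : Multiset (Fin 4))
        = (leafList ((FreeMagma.of a * FreeMagma.of b) * FreeMagma.of c) : Multiset (Fin 4)) from rfl, hu]
      exact (Finset.univ.erase 0).nodup
    have hmem : ∀ t : Fin 4, t ∈ ([a,b,c] : List (Fin 4)) → t ≠ 0 := by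
      intro t ht
      have : t ∈ (Finset.univ.erase (0 : Fin 4)) := by
        rw [← Finset.mem_val, ← hu]
        exact ht
      exact Finset.ne_of_mem_erase this
    have ha0 : a ≠ 0 := hmem a (by simp)
    have hb0 : b ≠ 0 := hmem b (by simp)
    have hc0 : c ≠ 0 := hmem c (by simp)
    simp only [List.nodup_cons, List.mem_cons, List.mem_singleton, List.not_mem_nil,
      or_false, not_or, Multiset.coe_nodup] at hnd
    obtain ⟨⟨hab, hac⟩, hbc, -⟩ := hnd
    rcases hw with rfl | rfl
    · have he : evalVar v (FreeMagma.of 0 * ((FreeMagma.of a * FreeMagma.of b) * FreeMagma.of c))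
          = -(G a b c) := by
        show v 0 * ((v a * v b) * v c) = _
        rw [hanti]
      rw [he]
      exact neg_mem (hG a b c ha0 hb0 hc0 hab hac hbc)
    · exact hG a b c ha0 hb0 hc0 hab hac hbc
  · have hnd : (([a, b, c] : List (Fin 4)) : Multiset (Fin 4)).Nodup := by
      rw [show (([a,b,c] : List (Fin 4)) : Multiset (Fin 4))
        = (leafList (FreeMagma.of a * (FreeMagma.of b * FreeMagma.of c)) : Multiset (Fin 4)) from rfl, hu]
      exact (Finset.univ.erase 0).nodup
    have hmem : ∀ t : Fin 4, t ∈ ([a,b,c] : List (Fin 4)) → t ≠ 0 := by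
      intro t ht
      have : t ∈ (Finset.univ.erase (0 : Fin 4)) := by
        rw [← Finset.mem_val, ← hu]
        exact ht
      exact Finset.ne_of_mem_erase this
    have ha0 : a ≠ 0 := hmem a (by simp)
    have hb0 : b ≠ 0 := hmem b (by simp)
    have hc0 : c ≠ 0 := hmem c (by simp)
    simp only [List.nodup_cons, List.mem_cons, List.mem_singleton, List.not_mem_nil,
      or_false, not_or, Multiset.coe_nodup] at hnd
    obtain ⟨⟨hab, hac⟩, hbc, -⟩ := hnd
    rcases hw with rfl | rfl
    · have he : evalVar v (FreeMagma.of 0 * (FreeMagma.of a * (FreeMagma.of b * FreeMagma.of c)))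
          = G b c a := by
        show v 0 * (v a * (v b * v c)) = _
        rw [hanti (v a), mul_neg, hanti (v 0), neg_neg]
      rw [he]
      exact hG b c a hb0 hc0 ha0 hbc (Ne.symm hab) (Ne.symm hac)
    · have he : evalVar v ((FreeMagma.of a * (FreeMagma.of b * FreeMagma.of c)) * FreeMagma.of 0)
          = -(G b c a) := by
        show (v a * (v b * v c)) * v 0 = _
        rw [hanti (v a), neg_mul]
      rw [he]
      exact neg_mem (hG b c a hb0 hc0 ha0 hbc (Ne.symm hab) (Ne.symm hac))

end Malcev

section Star
variable {F A : Type*} [Field F] [NonUnitalNonAssocRing A] [Module F A]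
  [SMulCommClass F A A] [IsScalarTower F A A]

def Bset (S : Set A) (n : ℕ) : Set A :=
  { a | ∃ w : FreeMagma A, HasLeavesIn S w ∧ KBounded 3 w ∧ wlen w ≤ n ∧ evalA w = a }

def Bspan (F : Type*) {A : Type*} [Field F] [NonUnitalNonAssocRing A] [Module F A]
    (S : Set A) (n : ℕ) : Submodule F A :=
  Submodule.span F (Bset S n)

lemma Bspan_mono {S : Set A} {m n : ℕ} (h : m ≤ n) : Bspan F S m ≤ Bspan F S n :=
  Submodule.span_mono (fun a ⟨w, h1, h2, h3, h4⟩ => ⟨w, h1, h2, h3.trans h, h4⟩)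

lemma hasLeavesIn_mul {S : Set A} {x y : FreeMagma A}
    (hx : HasLeavesIn S x) (hy : HasLeavesIn S y) : HasLeavesIn S (x * y) := by
  intro t ht
  rcases List.mem_append.mp ht with h | h
  · exact hx t h
  · exact hy t h

theorem star (hmix : IsKMixing F A 3) (S : Set A) :
    ∀ n, ∀ w : FreeMagma A, HasLeavesIn S w → wlen w ≤ n → evalA w ∈ Bspan F S n := by
  intro n
  induction n using Nat.strong_induction_on with
  | _ n IH =>
  have PC : ∀ s, ∀ a b : FreeMagma A, HasLeavesIn S a → HasLeavesIn S b →
      KBounded 3 a → KBounded 3 b → wlen a + wlen b ≤ n →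
      (wlen a ≤ s ∨ wlen b ≤ s) → evalA a * evalA b ∈ Bspan F S n := by
    intro s
    induction s with
    | zero =>
      intro a b _ _ _ _ _ hmin
      have := wlen_pos a; have := wlen_pos b; omega
    | succ s IHs =>
      intro a b haS hbS hka hkb hsum hmin
      by_cases hsm : wlen a ≤ 2 ∨ wlen b ≤ 2
      · refine Submodule.subset_span ⟨a * b, hasLeavesIn_mul haS hbS,
          kbounded_mul hka hkb hsm, ?_, by simp⟩
        rw [wlen_mul]; exact hsum
      · push_neg at hsm
        obtain ⟨ha3, hb3⟩ := hsm
        -- core: for c (the split side, 3 ≤ wlen c ≤ s+1) and d the other side,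
        -- both products are in Bspan n
        have core : ∀ c d : FreeMagma A, HasLeavesIn S c → HasLeavesIn S d →
            2 < wlen c → wlen c ≤ s + 1 → wlen c + wlen d ≤ n →
            evalA d * evalA c ∈ Bspan F S n ∧ evalA c * evalA d ∈ Bspan F S n := by
          intro c d hcS hdS hc3 hcs hcd
          obtain ⟨u, q, hmult, hsubst, hleaf⟩ := exists_three_split (w := c) hc3
          have hqS : ∀ i : Fin 3, HasLeavesIn S (q i) := by
            intro i t ht
            apply hcS
            rw [hleaf]
            simp only [List.mem_append]
            fin_cases i
            · exact Or.inl (Or.inl ht)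
            · exact Or.inl (Or.inr ht)
            · exact Or.inr ht
          have hgS : ∀ i : Fin 4, HasLeavesIn S ((Fin.cons d q : Fin 4 → FreeMagma A) i) := by
            refine Fin.cases ?_ ?_
            · exact hdS
            · exact fun i => hqS i
          have hwlenq : wlen c = wlen (q 0) + wlen (q 1) + wlen (q 2) := by
            show (leafList c).length = _
            rw [hleaf]; simp only [wlen, List.length_append]
          have huniv : (((Finset.univ : Finset (Fin 4)).val).map
              (fun i => wlen ((Fin.cons d q : Fin 4 → FreeMagma A) i))).sum
              = wlen d + wlen c := by
            have h4 : (((Finset.univ : Finset (Fin 4)).val).map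
                (fun i => wlen ((Fin.cons d q : Fin 4 → FreeMagma A) i))).sum
                = ∑ i : Fin 4, wlen ((Fin.cons d q : Fin 4 → FreeMagma A) i) := rfl
            rw [h4, Fin.sum_univ_four]
            show wlen d + wlen (q 0) + wlen (q 1) + wlen (q 2) = _
            omega
          have hvg : (Fin.cons (evalA d) (fun i => evalA (q i)) : Fin 4 → A)
              = fun i => evalA ((Fin.cons d q : Fin 4 → FreeMagma A) i) := by
            funext i
            refine Fin.cases rfl (fun j => rfl) i
          have hspanle : Submodule.span F
              { t | ∃ z : FreeMagma (Fin 4), InD0 (k := 3) z ∧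
                  evalVar (Fin.cons (evalA d) (fun i => evalA (q i))) z = t }
              ≤ Bspan F S n := by
            rw [Submodule.span_le]
            rintro _ ⟨z, hz, rfl⟩
            have hev : evalVar (Fin.cons (evalA d) (fun i => evalA (q i))) z
                = evalA (wsub (Fin.cons d q) z) := by
              rw [evalA_wsub, hvg]
            rw [hev]
            show evalA (wsub (Fin.cons d q) z) ∈ Bspan F S n
            by_cases hfull : (leafList z : Multiset (Fin 4)) = (Finset.univ : Finset (Fin 4)).val
            · -- z uses all four variables
              cases z with
              | of i =>
                exfalso
                have := congrArg Multiset.card hfull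
                simp [Finset.card_univ] at this
              | mul z1 z2 =>
                rw [show z1.mul z2 = z1 * z2 from rfl] at *
                have hz1ne : z1 ≠ FreeMagma.of 0 := by
                  rintro rfl
                  apply hz.2
                  refine ⟨z2, ?_, Or.inl rfl⟩
                  show (leafList z2 : Multiset (Fin 4)) = (Finset.univ.erase (0:Fin 4)).val
                  have hcons : (0:Fin 4) ::ₘ (leafList z2 : Multiset (Fin 4))
                      = (Finset.univ : Finset (Fin 4)).val := by
                    rw [← hfull]; rfl
                  rw [Finset.erase_val, ← hcons, Multiset.erase_cons_head]
                have hz2ne : z2 ≠ FreeMagma.of 0 := by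
                  rintro rfl
                  apply hz.2
                  refine ⟨z1, ?_, Or.inr rfl⟩
                  show (leafList z1 : Multiset (Fin 4)) = (Finset.univ.erase (0:Fin 4)).val
                  have hcons : (0:Fin 4) ::ₘ (leafList z1 : Multiset (Fin 4))
                      = (Finset.univ : Finset (Fin 4)).val := by
                    rw [← hfull]
                    show _ = ((leafList z1 ++ [0] : List (Fin 4)) : Multiset (Fin 4))
                    push_cast
                    rw [← Multiset.singleton_add, add_comm]
                    rfl
                  rw [Finset.erase_val, ← hcons, Multiset.erase_cons_head]
                have h0mem : (0:Fin 4) ∈ leafList z1 ++ leafList z2 := by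
                  have : (0:Fin 4) ∈ (leafList (z1*z2) : Multiset (Fin 4)) := by
                    rw [hfull]; simp
                  exact this
                have hWsum : wlen (wsub (Fin.cons d q) z1) + wlen (wsub (Fin.cons d q) z2)
                    = wlen d + wlen c := by
                  rw [wlen_wsub, wlen_wsub, ← List.sum_append, ← List.map_append]
                  have hm : ((leafList (z1*z2) : Multiset (Fin 4)).map
                      (fun i => wlen ((Fin.cons d q : Fin 4 → FreeMagma A) i))).sum
                      = wlen d + wlen c := by rw [hfull]; exact huniv
                  simpa using hm
                have hW1pos := wlen_pos (wsub (Fin.cons d q) z1)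
                have hW2pos := wlen_pos (wsub (Fin.cons d q) z2)
                -- key length bound for the side containing 0
                have hside : ∀ zz : FreeMagma (Fin 4), zz ≠ FreeMagma.of 0 →
                    (0:Fin 4) ∈ leafList zz →
                    wlen d + 1 ≤ wlen (wsub (Fin.cons d q) zz) := by
                  intro zz hne h0
                  have h2 : 2 ≤ (leafList zz).length := by
                    cases zz with
                    | of t =>
                      exfalso
                      simp only [leafList_of, List.mem_singleton] at h0
                      exact hne (by rw [h0])
                    | mul p r =>
                      have hp := wlen_pos p; have hr := wlen_pos r
                      show 2 ≤ (leafList (p.mul r)).length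
                      rw [show p.mul r = p * r from rfl, leafList_mul, List.length_append]
                      simp only [wlen] at hp hr
                      omega
                  have h0m : (0:Fin 4) ∈ (leafList zz : Multiset (Fin 4)) := h0
                  obtain ⟨r, hr⟩ := Multiset.exists_cons_of_mem h0m
                  have hrne : r ≠ 0 := by
                    intro h0r
                    have := congrArg Multiset.card hr
                    simp [h0r] at this
                    omega
                  obtain ⟨e, he⟩ := Multiset.exists_mem_of_ne_zero hrne
                  have hsum' : wlen (wsub (Fin.cons d q) zz)
                      = ((leafList zz : Multiset (Fin 4)).map
                        (fun i => wlen ((Fin.cons d q : Fin 4 → FreeMagma A) i))).sum := by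
                    rw [wlen_wsub]; simp
                  rw [hsum', hr, Multiset.map_cons, Multiset.sum_cons]
                  have h1 : wlen ((Fin.cons d q : Fin 4 → FreeMagma A) e)
                      ≤ (r.map (fun i => wlen ((Fin.cons d q : Fin 4 → FreeMagma A) i))).sum :=
                    Multiset.single_le_sum (fun x _ => Nat.zero_le x) _
                      (Multiset.mem_map_of_mem _ he)
                  have h2' : 1 ≤ wlen ((Fin.cons d q : Fin 4 → FreeMagma A) e) := wlen_pos _
                  have hf0 : wlen ((Fin.cons d q : Fin 4 → FreeMagma A) 0) = wlen d := rfl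
                  omega
                rw [wsub_mul, evalA_mul]
                rcases List.mem_append.mp h0mem with h0l | h0r
                · -- x inside left factor, right factor is "pure"
                  have hb1 := hside z1 hz1ne h0l
                  have hW2s : wlen (wsub (Fin.cons d q) z2) ≤ s := by omega
                  have hw1 : evalA (wsub (Fin.cons d q) z1)
                      ∈ Bspan F S (wlen (wsub (Fin.cons d q) z1)) :=
                    IH _ (by omega) _ (hasLeavesIn_wsub hgS z1) le_rfl
                  have hw2 : evalA (wsub (Fin.cons d q) z2)
                      ∈ Bspan F S (wlen (wsub (Fin.cons d q) z2)) :=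
                    IH _ (by omega) _ (hasLeavesIn_wsub hgS z2) le_rfl
                  refine mul_mem_span_span hw1 hw2 ?_
                  rintro _ ⟨wa, haS', hka', hla', rfl⟩ _ ⟨wb, hbS', hkb', hlb', rfl⟩
                  exact IHs wa wb haS' hbS' hka' hkb' (by omega) (Or.inr (by omega))
                · -- x inside right factor, left factor is "pure"
                  have hb2 := hside z2 hz2ne h0r
                  have hW1s : wlen (wsub (Fin.cons d q) z1) ≤ s := by omega
                  have hw1 : evalA (wsub (Fin.cons d q) z1)
                      ∈ Bspan F S (wlen (wsub (Fin.cons d q) z1)) :=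
                    IH _ (by omega) _ (hasLeavesIn_wsub hgS z1) le_rfl
                  have hw2 : evalA (wsub (Fin.cons d q) z2)
                      ∈ Bspan F S (wlen (wsub (Fin.cons d q) z2)) :=
                    IH _ (by omega) _ (hasLeavesIn_wsub hgS z2) le_rfl
                  refine mul_mem_span_span hw1 hw2 ?_
                  rintro _ ⟨wa, haS', hka', hla', rfl⟩ _ ⟨wb, hbS', hkb', hlb', rfl⟩
                  exact IHs wa wb haS' hbS' hka' hkb' (by omega) (Or.inl (by omega))
            · -- z misses some variable: strictly shorter word
              have hle : (leafList z : Multiset (Fin 4)) ≤ (Finset.univ : Finset (Fin 4)).val := by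
                refine (Multiset.le_iff_subset hz.1).mpr ?_
                intro t _
                simp
              obtain ⟨rest, hrest⟩ := Multiset.le_iff_exists_add.mp hle
              have hrestne : rest ≠ 0 := by
                intro h0
                exact hfull (by rw [hrest, h0, add_zero])
              obtain ⟨r0, hr0⟩ := Multiset.exists_mem_of_ne_zero hrestne
              have hWlen : wlen (wsub (Fin.cons d q) z)
                  = ((leafList z : Multiset (Fin 4)).map
                    (fun i => wlen ((Fin.cons d q : Fin 4 → FreeMagma A) i))).sum := by
                rw [wlen_wsub]; simp
              have hsplit : ((leafList z : Multiset (Fin 4)).map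
                    (fun i => wlen ((Fin.cons d q : Fin 4 → FreeMagma A) i))).sum
                  + (rest.map (fun i => wlen ((Fin.cons d q : Fin 4 → FreeMagma A) i))).sum
                  = wlen d + wlen c := by
                rw [← Multiset.sum_add, ← Multiset.map_add, ← hrest]
                exact huniv
              have hr1 : 1 ≤ (rest.map
                  (fun i => wlen ((Fin.cons d q : Fin 4 → FreeMagma A) i))).sum := by
                have h1 : wlen ((Fin.cons d q : Fin 4 → FreeMagma A) r0)
                    ≤ (rest.map (fun i => wlen ((Fin.cons d q : Fin 4 → FreeMagma A) i))).sum :=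
                  Multiset.single_le_sum (fun x _ => Nat.zero_le x) _
                    (Multiset.mem_map_of_mem _ hr0)
                have := wlen_pos ((Fin.cons d q : Fin 4 → FreeMagma A) r0)
                omega
              have hlt : wlen (wsub (Fin.cons d q) z) < n := by omega
              exact Bspan_mono (by omega) (IH _ hlt _ (hasLeavesIn_wsub hgS z) le_rfl)
          have hcu : evalVar (Fin.cons (evalA d) (fun i => evalA (q i))) u = evalA c := by
            rw [hvg, ← evalA_wsub, hsubst]
          constructor
          · have h1 := hmix (evalA d) (fun i => evalA (q i)) (FreeMagma.of 0 * u)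
              ⟨u, hmult, Or.inl rfl⟩
            rw [evalVar_mul, evalVar_of, hcu] at h1
            exact hspanle h1
          · have h1 := hmix (evalA d) (fun i => evalA (q i)) (u * FreeMagma.of 0)
              ⟨u, hmult, Or.inr rfl⟩
            rw [evalVar_mul, evalVar_of, hcu] at h1
            exact hspanle h1
        rcases hmin with hbnd | hbnd
        · exact (core a b haS hbS ha3 hbnd (by omega)).2
        · exact (core b a hbS haS hb3 hbnd (by omega)).1
  intro w hwS hwn
  rcases Nat.lt_or_ge (wlen w) n with hlt | hge
  · exact Bspan_mono (le_of_lt hlt) (IH (wlen w) hlt w hwS le_rfl)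
  · have hwn' : wlen w = n := by omega
    cases w with
    | of t =>
      exact Submodule.subset_span ⟨FreeMagma.of t, hwS, ⟨[], IsSprout.single t, by simp⟩,
        by simpa using hwn, rfl⟩
    | mul w1 w2 =>
      rw [show w1.mul w2 = w1 * w2 from rfl] at *
      rw [wlen_mul] at hwn'
      have h1 := wlen_pos w1; have h2 := wlen_pos w2
      have hw1S : HasLeavesIn S w1 := fun t ht => hwS t (List.mem_append.mpr (Or.inl ht))
      have hw2S : HasLeavesIn S w2 := fun t ht => hwS t (List.mem_append.mpr (Or.inr ht))
      have hb1 : evalA w1 ∈ Bspan F S (wlen w1) := IH _ (by omega) _ hw1S le_rfl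
      have hb2 : evalA w2 ∈ Bspan F S (wlen w2) := IH _ (by omega) _ hw2S le_rfl
      rw [evalA_mul]
      refine mul_mem_span_span hb1 hb2 ?_
      rintro _ ⟨wa, haS', hka', hla', rfl⟩ _ ⟨wb, hbS', hkb', hlb', rfl⟩
      exact PC n wa wb haS' hbS' hka' hkb' (by omega) (Or.inl (by omega))

end Star

section Count
variable {F A : Type*} [Field F] [NonUnitalNonAssocRing A] [Module F A]
  [SMulCommClass F A A] [IsScalarTower F A A]

lemma Lspan_mono {S : Set A} {i j : ℕ} (h : i ≤ j) : Lspan F S i ≤ Lspan F S j :=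
  Submodule.span_mono (fun a ⟨w, h1, h2, h3⟩ => ⟨w, h1, h2.trans h, h3⟩)

lemma stabilize (hmix : IsKMixing F A 3) {S : Set A} {t : ℕ}
    (h1 : Lspan F S (t+1) = Lspan F S t) (h2 : Lspan F S (t+2) = Lspan F S t) :
    ∀ m, t ≤ m → Lspan F S m = Lspan F S t := by
  intro m
  induction m using Nat.strong_induction_on with
  | _ m IH =>
  intro htm
  rcases Nat.lt_or_ge m (t+3) with hm | hm
  · rcases (by omega : m = t ∨ m = t + 1 ∨ m = t + 2) with rfl | rfl | rfl
    · rfl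
    · exact h1
    · exact h2
  · refine le_antisymm ?_ (Lspan_mono htm)
    refine Submodule.span_le.mpr ?_
    rintro x ⟨w, hwS, hwlen, rfl⟩
    have hB := star hmix S m w hwS hwlen
    suffices hBL : Bspan F S m ≤ Lspan F S t from hBL hB
    refine Submodule.span_le.mpr ?_
    rintro x ⟨w', hS', hk', hl', rfl⟩
    by_cases hsm : wlen w' ≤ m - 1
    · have hmem : evalA w' ∈ Lspan F S (m-1) := Submodule.subset_span ⟨w', hS', by omega, rfl⟩
      rwa [IH (m-1) (by omega) (by omega)] at hmem
    · have hw'm : wlen w' = m := by omega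
      obtain ⟨u', c', hor, hc2, -⟩ := kbounded_split hk' (by omega)
      have hcpos := wlen_pos c'
      have hupos := wlen_pos u'
      have hSu : HasLeavesIn S u' ∧ HasLeavesIn S c' := by
        rcases hor with rfl | rfl
        · exact ⟨fun x hx => hS' x (List.mem_append.mpr (Or.inl hx)),
            fun x hx => hS' x (List.mem_append.mpr (Or.inr hx))⟩
        · exact ⟨fun x hx => hS' x (List.mem_append.mpr (Or.inr hx)),
            fun x hx => hS' x (List.mem_append.mpr (Or.inl hx))⟩
      have hulen : wlen u' + wlen c' = m := by
        rcases hor with rfl | rfl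
        · rw [wlen_mul] at hw'm; omega
        · rw [wlen_mul] at hw'm; omega
      have humem : evalA u' ∈ Lspan F S t := by
        have hmem : evalA u' ∈ Lspan F S (m-1) :=
          Submodule.subset_span ⟨u', hSu.1, by omega, rfl⟩
        rwa [IH (m-1) (by omega) (by omega)] at hmem
      have hfin : ∀ y, y ∈ Lspan F S (t + wlen c') → y ∈ Lspan F S t := by
        intro y hy
        have : y ∈ Lspan F S (m-1) := Lspan_mono (by omega) hy
        rwa [IH (m-1) (by omega) (by omega)] at this
      rcases hor with rfl | rfl
      · rw [evalA_mul]
        refine hfin _ (mul_mem_span_left humem ?_)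
        rintro _ ⟨wa, h1', h2', rfl⟩
        exact Submodule.subset_span ⟨wa * c', hasLeavesIn_mul h1' hSu.2,
          by rw [wlen_mul]; omega, by simp⟩
      · rw [evalA_mul]
        refine hfin _ (mul_mem_span_right humem ?_)
        rintro _ ⟨wa, h1', h2', rfl⟩
        exact Submodule.subset_span ⟨c' * wa, hasLeavesIn_mul hSu.2 h1',
          by rw [wlen_mul]; omega, by simp⟩

lemma top_of_plateau (hmix : IsKMixing F A 3) {S : Set A} (hgen : Generates F S) {t : ℕ}
    (h1 : Lspan F S (t+1) = Lspan F S t) (h2 : Lspan F S (t+2) = Lspan F S t) :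
    Lspan F S t = ⊤ := by
  have hst := stabilize hmix h1 h2
  have hle : Submodule.span F { a | ∃ w : FreeMagma A, HasLeavesIn S w ∧ evalA w = a }
      ≤ Lspan F S t := by
    refine Submodule.span_le.mpr ?_
    rintro x ⟨w, hwS, rfl⟩
    rcases le_or_gt (wlen w) t with h | h
    · exact Submodule.subset_span ⟨w, hwS, h, rfl⟩
    · have hmem : evalA w ∈ Lspan F S (wlen w) := Submodule.subset_span ⟨w, hwS, le_rfl, rfl⟩
      rwa [hst (wlen w) (le_of_lt h)] at hmem
  rw [hgen] at hle
  exact eq_top_iff.mpr hle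

theorem part2 (hmix : IsKMixing F A 3) (d : ℕ) (hfd : FiniteDimensional F A)
    (hd : Module.finrank F A = d) (hd2 : 2 ≤ d) (S : Set A)
    (hgen : Generates F S) : lenS F S ≤ 2 * d := by
  have hL1bot : Lspan F S 1 = ⊥ → False := by
    intro hbot
    have hL0 : Lspan F S 0 = ⊥ := by
      refine le_bot_iff.mp ?_
      refine Submodule.span_le.mpr ?_
      rintro x ⟨w, -, hlen, rfl⟩
      have := wlen_pos w; omega
    have hL2 : Lspan F S 2 = ⊥ := by
      refine le_bot_iff.mp ?_
      refine Submodule.span_le.mpr ?_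
      rintro x ⟨w, hwS, hlen, rfl⟩
      have hwp := wlen_pos w
      rcases (by omega : wlen w = 1 ∨ wlen w = 2) with h1 | h2
      · obtain ⟨e, rfl⟩ := eq_of_wlen_one h1
        have : evalA (FreeMagma.of e) ∈ Lspan F S 1 :=
          Submodule.subset_span ⟨FreeMagma.of e, hwS, by simp, rfl⟩
        rwa [hbot] at this
      · obtain ⟨e, f, rfl⟩ := eq_of_wlen_two h2
        have he : (e : A) ∈ Lspan F S 1 :=
          Submodule.subset_span ⟨FreeMagma.of e, fun x hx => hwS x (by simpa using Or.inl (by simpa using hx)), by simp, rfl⟩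
        rw [hbot, Submodule.mem_bot] at he
        show evalA _ ∈ _
        rw [evalA_mul, evalA_of, evalA_of, he, zero_mul]
        exact Submodule.zero_mem _
    have htop : Lspan F S 0 = ⊤ :=
      top_of_plateau hmix hgen (by rw [hL0, hbot]) (by rw [hL0, hL2])
    have hz : ∀ x : A, x = 0 := by
      intro x
      have : x ∈ Lspan F S 0 := htop ▸ Submodule.mem_top
      rw [hL0, Submodule.mem_bot] at this
      exact this
    have : Subsingleton A := ⟨fun a b => by rw [hz a, hz b]⟩
    have : Module.finrank F A = 0 := Module.finrank_zero_of_subsingleton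
    omega
  have hplateau : ∀ t, Lspan F S t ≠ ⊤ → Lspan F S t < Lspan F S (t+2) := by
    intro t hne
    rcases (Lspan_mono (by omega : t ≤ t + 2) :
        Lspan F S t ≤ Lspan F S (t+2)).lt_or_eq with hlt | heq
    · exact hlt
    · exfalso
      apply hne
      refine top_of_plateau hmix hgen ?_ ?_
      · refine le_antisymm ?_ (Lspan_mono (by omega))
        rw [heq]
        exact Lspan_mono (by omega)
      · exact heq.symm
  have grow : ∀ j, Lspan F S (2*j+1) = ⊤ ∨ j + 1 ≤ Module.finrank F (Lspan F S (2*j+1)) := by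
    intro j
    induction j with
    | zero =>
      by_cases h : Lspan F S (2*0+1) = ⊤
      · exact Or.inl h
      · right
        show 0 + 1 ≤ _
        rw [Nat.one_le_iff_ne_zero]
        intro h0
        have : Lspan F S (2*0+1) = ⊥ := Submodule.finrank_eq_zero.mp h0
        exact hL1bot this
    | succ j IHj =>
      by_cases h : Lspan F S (2*(j+1)+1) = ⊤
      · exact Or.inl h
      · right
        have hne : Lspan F S (2*j+1) ≠ ⊤ := by
          intro he
          apply h
          refine eq_top_iff.mpr ?_
          rw [← he]
          exact Lspan_mono (by omega)
        have hr : j + 1 ≤ Module.finrank F (Lspan F S (2*j+1)) := by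
          rcases IHj with h' | h'
          · exact absurd h' hne
          · exact h'
        have hlt := hplateau (2*j+1) hne
        have heq : 2*j+1+2 = 2*(j+1)+1 := by omega
        rw [heq] at hlt
        have := Submodule.finrank_lt_finrank_of_lt hlt
        omega
  obtain h | h := grow (d-1)
  · have he : 2*(d-1)+1 ≤ 2*d := by omega
    have : Lspan F S (2*d) = ⊤ := eq_top_iff.mpr (h ▸ Lspan_mono he)
    exact Nat.sInf_le this
  · have hda : d ≤ Module.finrank F (Lspan F S (2*(d-1)+1)) := by omega
    have htop : Lspan F S (2*(d-1)+1) = ⊤ := by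
      refine Submodule.eq_top_of_finrank_eq ?_
      refine le_antisymm (by rw [hd]; exact hd ▸ Submodule.finrank_le _) ?_
      · rw [hd]; exact hda
    have : Lspan F S (2*d) = ⊤ := eq_top_iff.mpr (htop ▸ Lspan_mono (by omega))
    exact Nat.sInf_le this

end Count

section Statement
variable {F A : Type*} [Field F] [NonUnitalNonAssocRing A] [Module F A]
  [SMulCommClass F A A] [IsScalarTower F A A]

/- STATEMENT 1 -/
theorem stmt1
    (hchar : (2 : F) ≠ 0)
    (hanti : ∀ x y : A, x * y = -(y * x))
    (hmal : ∀ x y z : A, (x*y)*(x*z) = ((x*y)*z)*x + ((y*z)*x)*x + ((z*x)*x)*y) :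
    IsKMixing F A 3 ∧
    (∀ d : ℕ, FiniteDimensional F A → Module.finrank F A = d → 2 ≤ d →
      ∀ S : Set A, S.Finite → Generates F S → lenS F S ≤ 2 * d) := by
  have hmix := malcev_mixing hchar hanti hmal
  exact ⟨hmix, fun d hfd hd hd2 S _ hgen => part2 hmix d hfd hd hd2 S hgen⟩

end Statement

end P
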